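/- The type of suffix T[i..] is determined by T[i..j] where j ≥ i is the smallest position with T[j] ≠ T[j+1]: T[i..] is type S iff T[j] < T[j+1]. In particular, suffixes starting inside a common substring of two strings have equal types as long as the first position of character change after them lies within the common substring. -/

import Mathlib

private theorem lt_iff_lex {α : Type*} [LinearOrder α] (l l' : List α) :
    l < l' ↔ List.Lex (· < ·) l l' := Iff.rfl

private theorem cons_lt_cons_ne {α : Type*} [LinearOrder α] {a b : α} {l l' : List α}
    (h : a ≠ b) : (a :: l) < (b :: l') ↔ a < b := by
  rw [lt_iff_lex]
  constructor
  · intro hl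
    cases hl with
    | cons _ => exact absurd rfl h
    | rel h => exact h
  · exact fun h => List.Lex.rel h

private theorem cons_lt_cons_same {α : Type*} [LinearOrder α] {a : α} {l l' : List α} :
    (a :: l) < (a :: l') ↔ l < l' := by
  rw [lt_iff_lex, List.lex_cons_iff, ← lt_iff_lex]

private theorem stmt6_aux {α : Type*} [LinearOrder α] (T : List α) :
    ∀ (n i j : ℕ), i + n = j → ∀ (hj : j + 1 < T.length),
      (∀ (k : ℕ) (hik : i ≤ k) (hkj : k < j),
        T[k]'(by have := hj; omega) = T[k + 1]'(by have := hj; omega)) →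
      (T[j]'(by omega) ≠ T[j + 1]'(by omega)) →
      (T.drop i < T.drop (i + 1) ↔ T[j]'(by omega) < T[j + 1]'(by omega)) := by
  intro n
  induction n with
  | zero =>
    intro i j hn hj heq hne
    subst hn
    rw [List.drop_eq_getElem_cons (by omega : i + 1 < T.length),
        List.drop_eq_getElem_cons (by omega : i < T.length)]
    simp only [Nat.add_zero] at hne ⊢
    exact cons_lt_cons_ne hne
  | succ m ih =>
    intro i j hn hj heq hne
    have hij : i < j := by omega
    have hii : T[i]'(by omega) = T[i + 1]'(by omega) := heq i le_rfl hij
    rw [List.drop_eq_getElem_cons (by omega : i + 1 < T.length),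
        List.drop_eq_getElem_cons (by omega : i < T.length), hii,
        cons_lt_cons_same]
    exact ih (i + 1) j (by omega) hj (fun k hik hkj => heq k (by omega) hkj) hne

/-- The type of suffix `T[i..]` is determined by `T[i..j]` where
`j ≥ i` is the smallest position with `T[j] ≠ T[j+1]`: suffix `i` is type S
(`T.drop i < T.drop (i+1)`) iff `T[j] < T[j+1]`.  In particular, suffixes
starting inside a common substring of two strings `T` and `U` have equal types
as long as the first position of character change after them lies within the
common substring. -/
theorem stmt6 {α : Type*} [LinearOrder α] (T : List α) :
    (∀ (i j : ℕ) (hij : i ≤ j) (hj : j + 1 < T.length)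
      (heq : ∀ (k : ℕ) (hik : i ≤ k) (hkj : k < j),
        T[k]'(by omega) = T[k + 1]'(by omega))
      (hne : T[j]'(by omega) ≠ T[j + 1]'(by omega)),
      (T.drop i < T.drop (i + 1) ↔ T[j]'(by omega) < T[j + 1]'(by omega))) ∧
    (∀ (U : List α) (p q L i j : ℕ)
      (hpL : p + L ≤ T.length) (hqL : q + L ≤ U.length)
      (hcommon : (T.drop p).take L = (U.drop q).take L)
      (hij : i ≤ j) (hjL : j + 1 < L)
      (heq : ∀ (k : ℕ) (hik : i ≤ k) (hkj : k < j),
        T[p + k]'(by omega) = T[p + k + 1]'(by omega))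
      (hne : T[p + j]'(by omega) ≠ T[p + j + 1]'(by omega)),
      (T.drop (p + i) < T.drop (p + i + 1) ↔
       U.drop (q + i) < U.drop (q + i + 1))) := by
  constructor
  · intro i j hij hj heq hne
    exact stmt6_aux T (j - i) i j (by omega) hj heq hne
  · intro U p q L i j hpL hqL hcommon hij hjL heq hne
    -- characters agree on the common substring
    have hTU : ∀ (k : ℕ) (hk : k < L),
        T[p + k]'(by omega) = U[q + k]'(by omega) := by
      intro k hk
      have hlen : k < ((T.drop p).take L).length := by
        simp only [List.length_take, List.length_drop]
        omega
      have h1 : ((T.drop p).take L)[k]'(hlen) =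
          ((U.drop q).take L)[k]'(hcommon ▸ hlen) := by
        congr 1
      simpa [List.getElem_take, List.getElem_drop] using h1
    -- heq reindexed for T
    have heqT : ∀ (k : ℕ) (hik : p + i ≤ k) (hkj : k < p + j),
        T[k]'(by omega) = T[k + 1]'(by omega) := by
      intro k hik hkj
      have hh := heq (k - p) (by omega) (by omega)
      simp only [show p + (k - p) = k from by omega] at hh
      exact hh
    -- heq transported to U
    have heqU : ∀ (k : ℕ) (hik : q + i ≤ k) (hkj : k < q + j),
        U[k]'(by omega) = U[k + 1]'(by omega) := by
      intro k hik hkj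
      have e1 := hTU (k - q) (by omega)
      have e2 := hTU (k - q + 1) (by omega)
      have hh := heqT (p + (k - q)) (by omega) (by omega)
      simp only [show q + (k - q) = k from by omega] at e1
      simp only [show p + (k - q + 1) = p + (k - q) + 1 from by omega,
        show q + (k - q + 1) = k + 1 from by omega] at e2
      exact e1.symm.trans (hh.trans e2)
    have hTj : T[p + j]'(by omega) = U[q + j]'(by omega) := hTU j (by omega)
    have hTj1 : T[p + j + 1]'(by omega) = U[q + j + 1]'(by omega) := by
      have h := hTU (j + 1) (by omega)
      simpa only [show p + (j + 1) = p + j + 1 from by omega,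
        show q + (j + 1) = q + j + 1 from by omega] using h
    have hneU : U[q + j]'(by omega) ≠ U[q + j + 1]'(by omega) := by
      rw [← hTj, ← hTj1]; exact hne
    have h1 := stmt6_aux T (j - i) (p + i) (p + j) (by omega) (by omega)
      heqT (by simpa using hne)
    have h2 := stmt6_aux U (j - i) (q + i) (q + j) (by omega) (by omega)
      heqU hneU
    rw [h1, h2, hTj, hTj1]
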